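/- Under Condition (C), define the scale mapping 𝒫 : I → ℝ² by 𝒫(0) := 0 and 𝒫(x) := p_θ(r) · x/‖x‖ for x ≠ 0 with polar coordinates (r,θ). Then 𝒫 is a bijection from I onto J := {(r,θ) in polar coordinates : 0 ≤ r < p_θ(ℓ(θ)−)}, and both 𝒫 and its inverse mapping 𝒬 : J → I are continuous with respect to the tree-metric ρ; in other words, 𝒫 is a homeomorphism from I onto J when both sets carry the tree-topology. -/

import Mathlib

open MeasureTheory Set
open scoped Classical ENNReal

/-- `p′_θ(y) = exp(−2∫₀^y b(z,θ)/s(z,θ)² dz)`, the derivative of the radial scale function. -/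
noncomputable def pprime (b s : ℝ → ℝ → ℝ) (θ y : ℝ) : ℝ :=
  Real.exp (-2 * ∫ z in (0:ℝ)..y, b z θ / (s z θ) ^ 2)

/-- The radial scale function `p_θ(r) = ∫₀^r p′_θ(y) dy`. -/
noncomputable def pscale (b s : ℝ → ℝ → ℝ) (θ r : ℝ) : ℝ :=
  ∫ y in (0:ℝ)..r, pprime b s θ y

/-- Condition (C): `ℓ` is measurable and bounded away from zero, `b` and `s` are Borel
measurable on `Ǐ`, `s` vanishes nowhere on `Ǐ`, `b/s²` and `1/s²` are locally integrable
on `(0,ℓ(θ))` along each ray, and `(1+|b|)/s²` is bounded near the origin. -/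
structure CondC (ℓ : ℝ → ℝ≥0∞) (b s : ℝ → ℝ → ℝ) : Prop where
  meas_ell : Measurable ℓ
  ell_pos : 0 < ⨅ θ ∈ Ico (0:ℝ) (2 * Real.pi), ℓ θ
  meas_b : Measurable
    (Set.restrict {q : ℝ × ℝ | 0 < q.1 ∧ ENNReal.ofReal q.1 < ℓ q.2 ∧
      q.2 ∈ Ico (0:ℝ) (2 * Real.pi)} (fun q => b q.1 q.2))
  meas_s : Measurable
    (Set.restrict {q : ℝ × ℝ | 0 < q.1 ∧ ENNReal.ofReal q.1 < ℓ q.2 ∧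
      q.2 ∈ Ico (0:ℝ) (2 * Real.pi)} (fun q => s q.1 q.2))
  s_ne : ∀ θ ∈ Ico (0:ℝ) (2 * Real.pi), ∀ r : ℝ, 0 < r → ENNReal.ofReal r < ℓ θ →
    s r θ ≠ 0
  loc_int_b : ∀ θ ∈ Ico (0:ℝ) (2 * Real.pi), ∀ r₁ r₂ : ℝ, 0 < r₁ → r₁ ≤ r₂ →
    ENNReal.ofReal r₂ < ℓ θ → IntegrableOn (fun z => b z θ / (s z θ) ^ 2) (Icc r₁ r₂)
  loc_int_s : ∀ θ ∈ Ico (0:ℝ) (2 * Real.pi), ∀ r₁ r₂ : ℝ, 0 < r₁ → r₁ ≤ r₂ →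
    ENNReal.ofReal r₂ < ℓ θ → IntegrableOn (fun z => 1 / (s z θ) ^ 2) (Icc r₁ r₂)
  bound_near_origin : ∃ η : ℝ, 0 < η ∧
    ENNReal.ofReal η < (⨅ θ ∈ Ico (0:ℝ) (2 * Real.pi), ℓ θ) ∧
    ∃ C : ℝ, ∀ θ ∈ Ico (0:ℝ) (2 * Real.pi), ∀ r ∈ Ioc (0:ℝ) η,
      (1 + |b r θ|) / (s r θ) ^ 2 ≤ C

/-- Two points of the plane lie on the same ray emanating from the origin. -/
def OnSameRay (x y : EuclideanSpace ℝ (Fin 2)) : Prop :=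
  x = 0 ∨ y = 0 ∨ ∃ t : ℝ, 0 < t ∧ y = t • x

/-- The tree-metric on the plane. -/
noncomputable def treeDist (x y : EuclideanSpace ℝ (Fin 2)) : ℝ :=
  if OnSameRay x y then |‖x‖ - ‖y‖| else ‖x‖ + ‖y‖

/-- The argument of a planar point, normalized to lie in `[0, 2π)`. -/
noncomputable def argOf (x : EuclideanSpace ℝ (Fin 2)) : ℝ :=
  if Complex.arg (⟨x 0, x 1⟩ : ℂ) < 0 then Complex.arg (⟨x 0, x 1⟩ : ℂ) + 2 * Real.pi
  else Complex.arg (⟨x 0, x 1⟩ : ℂ)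

/-- `p_θ(ℓ(θ)−) := sup_{0 ≤ r < ℓ(θ)} p_θ(r)`, as an extended nonnegative real. -/
noncomputable def pEnd (ℓ : ℝ → ℝ≥0∞) (b s : ℝ → ℝ → ℝ) (θ : ℝ) : ℝ≥0∞ :=
  ⨆ r ∈ {r : ℝ | 0 ≤ r ∧ ENNReal.ofReal r < ℓ θ}, ENNReal.ofReal (pscale b s θ r)

/-- The set `I = {(r,θ) : 0 ≤ r < ℓ(θ)}` in polar coordinates. -/
noncomputable def Iset (ℓ : ℝ → ℝ≥0∞) : Set (EuclideanSpace ℝ (Fin 2)) :=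
  {x | ENNReal.ofReal ‖x‖ < ℓ (argOf x)}

/-- The set `J = {(r,θ) : 0 ≤ r < p_θ(ℓ(θ)−)}` in polar coordinates. -/
noncomputable def Jset (ℓ : ℝ → ℝ≥0∞) (b s : ℝ → ℝ → ℝ) :
    Set (EuclideanSpace ℝ (Fin 2)) :=
  {x | ENNReal.ofReal ‖x‖ < pEnd ℓ b s (argOf x)}

/-- The scale mapping `𝒫(x) = p_θ(r)·x/‖x‖` for `x ≠ 0` with polar coordinates `(r,θ)`,
and `𝒫(0) = 0`. -/
noncomputable def Pmap (b s : ℝ → ℝ → ℝ) (x : EuclideanSpace ℝ (Fin 2)) :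
    EuclideanSpace ℝ (Fin 2) :=
  pscale b s (argOf x) ‖x‖ • (‖x‖⁻¹ • x)



lemma argOf_mem (x : EuclideanSpace ℝ (Fin 2)) : argOf x ∈ Ico (0:ℝ) (2 * Real.pi) := by
  unfold argOf
  have h1 := Complex.neg_pi_lt_arg (⟨x 0, x 1⟩ : ℂ)
  have h2 := Complex.arg_le_pi (⟨x 0, x 1⟩ : ℂ)
  have hpi := Real.pi_pos
  split_ifs with hlt
  · constructor <;> [linarith; linarith]
  · push_neg at hlt; constructor <;> [linarith; linarith]

lemma argOf_smul (x : EuclideanSpace ℝ (Fin 2)) {t : ℝ} (ht : 0 < t) :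
    argOf (t • x) = argOf x := by
  have h0 : (t • x) 0 = t * x 0 := rfl
  have h1 : (t • x) 1 = t * x 1 := rfl
  have key : (⟨(t • x) 0, (t • x) 1⟩ : ℂ) = (t : ℂ) * ⟨x 0, x 1⟩ := by
    apply Complex.ext <;> simp [h0, h1]
  unfold argOf
  rw [key, Complex.arg_real_mul _ ht]

lemma argOf_zero : argOf (0 : EuclideanSpace ℝ (Fin 2)) = 0 := by
  have h0 : (0 : EuclideanSpace ℝ (Fin 2)) 0 = 0 := rfl
  have h1 : (0 : EuclideanSpace ℝ (Fin 2)) 1 = 0 := rfl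
  unfold argOf
  rw [h0, h1]
  have : ({ re := 0, im := 0 } : ℂ) = 0 := Complex.ext rfl rfl
  rw [this, Complex.arg_zero]
  norm_num

lemma treeDist_zero_left (y : EuclideanSpace ℝ (Fin 2)) : treeDist 0 y = ‖y‖ := by
  have hray : OnSameRay 0 y := Or.inl rfl
  unfold treeDist
  rw [if_pos hray]
  simp

lemma norm_smul_dir (x : EuclideanSpace ℝ (Fin 2)) : ‖x‖ • (‖x‖⁻¹ • x) = x := by
  by_cases hx : x = 0
  · simp [hx]
  · rw [smul_smul, mul_inv_cancel₀ (norm_ne_zero_iff.mpr hx), one_smul]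

lemma norm_dir {x : EuclideanSpace ℝ (Fin 2)} (hx : x ≠ 0) : ‖‖x‖⁻¹ • x‖ = 1 := by
  rw [norm_smul, norm_inv, norm_norm, inv_mul_cancel₀ (norm_ne_zero_iff.mpr hx)]

lemma dir_smul {x : EuclideanSpace ℝ (Fin 2)} {t : ℝ} (ht : 0 < t) :
    ‖t • x‖⁻¹ • (t • x) = ‖x‖⁻¹ • x := by
  by_cases hx : x = 0
  · simp [hx]
  · have hn : ‖x‖ ≠ 0 := norm_ne_zero_iff.mpr hx
    rw [norm_smul, Real.norm_eq_abs, abs_of_pos ht, smul_smul]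
    rw [mul_inv]
    congr 1
    field_simp

lemma treeDist_smul {d : EuclideanSpace ℝ (Fin 2)} (hd : ‖d‖ = 1) {a a' : ℝ}
    (ha : 0 ≤ a) (ha' : 0 ≤ a') : treeDist (a • d) (a' • d) = |a - a'| := by
  have hn : ‖a • d‖ = a := by
    rw [norm_smul, hd, mul_one, Real.norm_eq_abs, abs_of_nonneg ha]
  have hn' : ‖a' • d‖ = a' := by
    rw [norm_smul, hd, mul_one, Real.norm_eq_abs, abs_of_nonneg ha']
  have hray : OnSameRay (a • d) (a' • d) := by
    rcases eq_or_lt_of_le ha with rfl | hapos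
    · left; rw [zero_smul]
    · rcases eq_or_lt_of_le ha' with rfl | ha'pos
      · right; left; rw [zero_smul]
      · right; right
        exact ⟨a' / a, by positivity, by rw [smul_smul, div_mul_cancel₀ _ hapos.ne']⟩
  unfold treeDist
  rw [if_pos hray, hn, hn']

lemma eq_smul_of_treeDist_lt {x y : EuclideanSpace ℝ (Fin 2)} (hx : x ≠ 0)
    (hlt : treeDist x y < ‖x‖) : ∃ t : ℝ, 0 < t ∧ y = t • x := by
  unfold treeDist at hlt
  by_cases hs : OnSameRay x y
  · rw [if_pos hs] at hlt
    rcases hs with h0 | h0 | ht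
    · exact absurd h0 hx
    · rw [h0] at hlt
      simp at hlt
    · exact ht
  · rw [if_neg hs] at hlt
    linarith [norm_nonneg y]


variable {ℓ : ℝ → ℝ≥0∞} {b s : ℝ → ℝ → ℝ}

lemma g_int (h : CondC ℓ b s) {θ : ℝ} (hθ : θ ∈ Ico (0:ℝ) (2 * Real.pi)) {r : ℝ}
    (hr0 : 0 < r) (hr : ENNReal.ofReal r < ℓ θ) :
    IntegrableOn (fun z => b z θ / (s z θ) ^ 2) (Ioc 0 r) := by
  set g : ℝ → ℝ := fun z => b z θ / (s z θ) ^ 2 with hg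
  -- measurability on (0, r]
  have hsub : Ioc (0:ℝ) r ⊆ ⋃ n : ℕ, Icc (r / (n + 1)) r := by
    intro z hz
    obtain ⟨n, hn⟩ := exists_nat_ge (r / z)
    refine mem_iUnion.mpr ⟨n, ?_, hz.2⟩
    rw [div_le_iff₀ (by positivity)]
    have hz0 := hz.1
    rw [div_le_iff₀ hz0] at hn
    nlinarith
  have hmeas : AEStronglyMeasurable g (volume.restrict (Ioc 0 r)) := by
    have hall : ∀ n : ℕ, AEStronglyMeasurable g (volume.restrict (Icc (r / (n + 1)) r)) := by
      intro n
      exact (h.loc_int_b θ hθ (r / (n + 1)) r (by positivity)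
        (div_le_self hr0.le (by norm_num)) hr).aestronglyMeasurable
    exact (aestronglyMeasurable_iUnion_iff.mpr hall).mono_measure
      (Measure.restrict_mono hsub le_rfl)
  obtain ⟨η, hη, hηl, C, hC⟩ := h.bound_near_origin
  have hηθ : ENNReal.ofReal η < ℓ θ := lt_of_lt_of_le hηl (iInf₂_le θ hθ)
  have hbdd : ∀ m : ℝ, m ≤ η → m ≤ r → IntegrableOn g (Ioc 0 m) := by
    intro m hmη hmr
    refine ⟨hmeas.mono_measure (Measure.restrict_mono (Ioc_subset_Ioc le_rfl hmr) le_rfl), ?_⟩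
    refine HasFiniteIntegral.restrict_of_bounded (C := C) measure_Ioc_lt_top ?_
    refine (ae_restrict_iff' measurableSet_Ioc).mpr (ae_of_all _ ?_)
    intro z hz
    have hb := hC θ hθ z ⟨hz.1, hz.2.trans hmη⟩
    have hs2 : (0:ℝ) ≤ (s z θ) ^ 2 := sq_nonneg _
    have : ‖g z‖ = |b z θ| / (s z θ) ^ 2 := by
      rw [hg]
      simp only [Real.norm_eq_abs, abs_div, abs_pow, sq_abs]
    rw [this]
    calc |b z θ| / (s z θ) ^ 2 ≤ (1 + |b z θ|) / (s z θ) ^ 2 := by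
          gcongr; linarith [abs_nonneg (b z θ)]
      _ ≤ C := hb
  rcases le_total r η with hcase | hcase
  · exact hbdd r hcase le_rfl
  · have h1 : IntegrableOn g (Ioc 0 η) := hbdd η le_rfl hcase
    have h2 : IntegrableOn g (Ioc η r) :=
      (h.loc_int_b θ hθ η r hη hcase hr).mono_set Ioc_subset_Icc_self
    have := h1.union h2
    rwa [Ioc_union_Ioc_eq_Ioc hη.le hcase] at this

lemma F_contOn (h : CondC ℓ b s) {θ : ℝ} (hθ : θ ∈ Ico (0:ℝ) (2 * Real.pi)) {r : ℝ}
    (hr0 : 0 ≤ r) (hr : ENNReal.ofReal r < ℓ θ) :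
    ContinuousOn (fun y => ∫ z in (0:ℝ)..y, b z θ / (s z θ) ^ 2) (Icc 0 r) := by
  rcases eq_or_lt_of_le hr0 with rfl | hr0'
  · rw [Icc_self]
    exact (Set.subsingleton_singleton).continuousOn _
  · have hint : IntegrableOn (fun z => b z θ / (s z θ) ^ 2) (uIcc 0 r) := by
      rw [uIcc_of_le hr0, integrableOn_Icc_iff_integrableOn_Ioc]
      exact g_int h hθ hr0' hr
    have := intervalIntegral.continuousOn_primitive_interval hint
    rwa [uIcc_of_le hr0] at this

lemma pprime_pos (θ y : ℝ) : 0 < pprime b s θ y := Real.exp_pos _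

lemma pprime_contOn (h : CondC ℓ b s) {θ : ℝ} (hθ : θ ∈ Ico (0:ℝ) (2 * Real.pi)) {r : ℝ}
    (hr0 : 0 ≤ r) (hr : ENNReal.ofReal r < ℓ θ) :
    ContinuousOn (pprime b s θ) (Icc 0 r) := by
  have := F_contOn h hθ hr0 hr
  exact Real.continuous_exp.comp_continuousOn ((continuousOn_const).mul this)

lemma pprime_intInt (h : CondC ℓ b s) {θ : ℝ} (hθ : θ ∈ Ico (0:ℝ) (2 * Real.pi)) {r₁ r₂ : ℝ}
    (h1 : 0 ≤ r₁) (h2 : r₁ ≤ r₂) (hr : ENNReal.ofReal r₂ < ℓ θ) :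
    IntervalIntegrable (pprime b s θ) volume r₁ r₂ := by
  apply ContinuousOn.intervalIntegrable
  apply (pprime_contOn h hθ (h1.trans h2) hr).mono
  rw [uIcc_of_le h2]
  exact Icc_subset_Icc h1 le_rfl

lemma pscale_contOn (h : CondC ℓ b s) {θ : ℝ} (hθ : θ ∈ Ico (0:ℝ) (2 * Real.pi)) {r : ℝ}
    (hr0 : 0 ≤ r) (hr : ENNReal.ofReal r < ℓ θ) :
    ContinuousOn (pscale b s θ) (Icc 0 r) := by
  have hint : IntegrableOn (pprime b s θ) (uIcc 0 r) := by
    rw [uIcc_of_le hr0]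
    exact (pprime_contOn h hθ hr0 hr).integrableOn_Icc
  have := intervalIntegral.continuousOn_primitive_interval hint
  rwa [uIcc_of_le hr0] at this

lemma pscale_zero (θ : ℝ) : pscale b s θ 0 = 0 := intervalIntegral.integral_same

lemma pscale_nonneg (θ : ℝ) {r : ℝ} (hr : 0 ≤ r) : 0 ≤ pscale b s θ r :=
  intervalIntegral.integral_nonneg hr (fun y _ => (pprime_pos θ y).le)

lemma pscale_lt (h : CondC ℓ b s) {θ : ℝ} (hθ : θ ∈ Ico (0:ℝ) (2 * Real.pi)) {r₁ r₂ : ℝ}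
    (h1 : 0 ≤ r₁) (h12 : r₁ < r₂) (hr : ENNReal.ofReal r₂ < ℓ θ) :
    pscale b s θ r₁ < pscale b s θ r₂ := by
  have hi1 : IntervalIntegrable (pprime b s θ) volume 0 r₁ :=
    pprime_intInt h hθ le_rfl h1 (lt_of_le_of_lt (by
      exact ENNReal.ofReal_le_ofReal h12.le) hr)
  have hi2 : IntervalIntegrable (pprime b s θ) volume r₁ r₂ :=
    pprime_intInt h hθ h1 h12.le hr
  have hadd := intervalIntegral.integral_add_adjacent_intervals hi1 hi2
  have hpos : 0 < ∫ y in r₁..r₂, pprime b s θ y :=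
    intervalIntegral.intervalIntegral_pos_of_pos_on hi2 (fun x _ => pprime_pos θ x) h12
  have : pscale b s θ r₂ = pscale b s θ r₁ + ∫ y in r₁..r₂, pprime b s θ y := by
    rw [pscale, pscale, ← hadd]
  linarith

lemma pscale_pos (h : CondC ℓ b s) {θ : ℝ} (hθ : θ ∈ Ico (0:ℝ) (2 * Real.pi)) {r : ℝ}
    (hr0 : 0 < r) (hr : ENNReal.ofReal r < ℓ θ) : 0 < pscale b s θ r := by
  have := pscale_lt h hθ le_rfl hr0 hr
  rwa [pscale_zero] at this

lemma pscale_inj (h : CondC ℓ b s) {θ : ℝ} (hθ : θ ∈ Ico (0:ℝ) (2 * Real.pi)) {r₁ r₂ : ℝ}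
    (h1 : 0 ≤ r₁) (h2 : 0 ≤ r₂) (hℓ1 : ENNReal.ofReal r₁ < ℓ θ) (hℓ2 : ENNReal.ofReal r₂ < ℓ θ)
    (heq : pscale b s θ r₁ = pscale b s θ r₂) : r₁ = r₂ := by
  rcases lt_trichotomy r₁ r₂ with hc | hc | hc
  · exact absurd heq (ne_of_lt (pscale_lt h hθ h1 hc hℓ2))
  · exact hc
  · exact absurd heq.symm (ne_of_lt (pscale_lt h hθ h2 hc hℓ1))

lemma pscale_mono (h : CondC ℓ b s) {θ : ℝ} (hθ : θ ∈ Ico (0:ℝ) (2 * Real.pi)) {r₁ r₂ : ℝ}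
    (h1 : 0 ≤ r₁) (h12 : r₁ ≤ r₂) (hr : ENNReal.ofReal r₂ < ℓ θ) :
    pscale b s θ r₁ ≤ pscale b s θ r₂ := by
  rcases eq_or_lt_of_le h12 with rfl | hlt
  · exact le_rfl
  · exact (pscale_lt h hθ h1 hlt hr).le


lemma exists_dom_gt {θ r : ℝ} (hr : ENNReal.ofReal r < ℓ θ) :
    ∃ r', r < r' ∧ ENNReal.ofReal r' < ℓ θ := by
  obtain ⟨q, _, hq1, hq2⟩ := ENNReal.lt_iff_exists_real_btwn.mp hr
  have hq0 : 0 < q := ENNReal.ofReal_pos.mp (lt_of_le_of_lt zero_le hq1)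
  exact ⟨q, (ENNReal.ofReal_lt_ofReal_iff hq0).mp hq1, hq2⟩

lemma pEnd_gt (h : CondC ℓ b s) {θ : ℝ} (hθ : θ ∈ Ico (0:ℝ) (2 * Real.pi)) {r : ℝ}
    (h0 : 0 ≤ r) (hr : ENNReal.ofReal r < ℓ θ) :
    ENNReal.ofReal (pscale b s θ r) < pEnd ℓ b s θ := by
  obtain ⟨r', hrr', hr'⟩ := exists_dom_gt hr
  have hlt := pscale_lt h hθ h0 hrr' hr'
  have hpos : 0 < pscale b s θ r' := pscale_pos h hθ (h0.trans_lt hrr') hr'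
  calc ENNReal.ofReal (pscale b s θ r) < ENNReal.ofReal (pscale b s θ r') :=
        (ENNReal.ofReal_lt_ofReal_iff hpos).mpr hlt
    _ ≤ pEnd ℓ b s θ :=
        le_iSup₂ (f := fun (r : ℝ) (_ : r ∈ {r : ℝ | 0 ≤ r ∧ ENNReal.ofReal r < ℓ θ}) =>
          ENNReal.ofReal (pscale b s θ r)) r' ⟨(h0.trans_lt hrr').le, hr'⟩

lemma ell_theta_pos (h : CondC ℓ b s) {θ : ℝ} (hθ : θ ∈ Ico (0:ℝ) (2 * Real.pi)) :
    ENNReal.ofReal 0 < ℓ θ := by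
  rw [ENNReal.ofReal_zero]
  exact lt_of_lt_of_le h.ell_pos (iInf₂_le θ hθ)

lemma pEnd_pos (h : CondC ℓ b s) {θ : ℝ} (hθ : θ ∈ Ico (0:ℝ) (2 * Real.pi)) :
    0 < pEnd ℓ b s θ := by
  have := pEnd_gt h hθ le_rfl (ell_theta_pos h hθ)
  rwa [pscale_zero, ENNReal.ofReal_zero] at this

lemma pEnd_surj (h : CondC ℓ b s) {θ : ℝ} (hθ : θ ∈ Ico (0:ℝ) (2 * Real.pi)) {u : ℝ}
    (hu0 : 0 ≤ u) (hu : ENNReal.ofReal u < pEnd ℓ b s θ) :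
    ∃ r, 0 ≤ r ∧ ENNReal.ofReal r < ℓ θ ∧ pscale b s θ r = u := by
  rw [pEnd, lt_iSup_iff] at hu
  obtain ⟨r, hu⟩ := hu
  rw [lt_iSup_iff] at hu
  obtain ⟨hr, hlt⟩ := hu
  have hur : u < pscale b s θ r := by
    have hpos : 0 < pscale b s θ r := ENNReal.ofReal_pos.mp (lt_of_le_of_lt zero_le hlt)
    exact (ENNReal.ofReal_lt_ofReal_iff hpos).mp hlt
  have hmem : u ∈ Icc (pscale b s θ 0) (pscale b s θ r) := by
    rw [pscale_zero]; exact ⟨hu0, hur.le⟩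
  obtain ⟨r', hr'mem, hr'⟩ := intermediate_value_Icc hr.1 (pscale_contOn h hθ hr.1 hr.2) hmem
  exact ⟨r', hr'mem.1, lt_of_le_of_lt (ENNReal.ofReal_le_ofReal hr'mem.2) hr.2, hr'⟩

lemma pscale_near (h : CondC ℓ b s) {η C : ℝ} (hη : 0 < η)
    (hηl : ENNReal.ofReal η < ⨅ θ ∈ Ico (0:ℝ) (2 * Real.pi), ℓ θ)
    (hC : ∀ θ ∈ Ico (0:ℝ) (2 * Real.pi), ∀ r ∈ Ioc (0:ℝ) η, (1 + |b r θ|) / (s r θ) ^ 2 ≤ C)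
    {θ : ℝ} (hθ : θ ∈ Ico (0:ℝ) (2 * Real.pi)) {r : ℝ} (hr : r ∈ Icc (0:ℝ) η) :
    Real.exp (-(2 * C * η)) * r ≤ pscale b s θ r ∧
      pscale b s θ r ≤ Real.exp (2 * C * η) * r := by
  have hηθ : ENNReal.ofReal η < ℓ θ := lt_of_lt_of_le hηl (iInf₂_le θ hθ)
  have hC0 : 0 < C := by
    have hs := h.s_ne θ hθ η hη hηθ
    have hs2 : 0 < (s η θ) ^ 2 := by positivity
    exact lt_of_lt_of_le (div_pos (by positivity) hs2) (hC θ hθ η ⟨hη, le_rfl⟩)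
  have hF : ∀ y ∈ Icc (0:ℝ) η, |∫ z in (0:ℝ)..y, b z θ / (s z θ) ^ 2| ≤ C * η := by
    intro y hy
    have hb : ∀ z ∈ Set.uIoc (0:ℝ) y, ‖b z θ / (s z θ) ^ 2‖ ≤ C := by
      intro z hz
      rw [Set.uIoc_of_le hy.1] at hz
      have hbz := hC θ hθ z ⟨hz.1, hz.2.trans hy.2⟩
      have : ‖b z θ / (s z θ) ^ 2‖ = |b z θ| / (s z θ) ^ 2 := by
        simp only [Real.norm_eq_abs, abs_div, abs_pow, sq_abs]
      rw [this]
      calc |b z θ| / (s z θ) ^ 2 ≤ (1 + |b z θ|) / (s z θ) ^ 2 := by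
            gcongr; linarith [abs_nonneg (b z θ)]
        _ ≤ C := hbz
    have := intervalIntegral.norm_integral_le_of_norm_le_const hb
    rw [Real.norm_eq_abs, sub_zero, abs_of_nonneg hy.1] at this
    calc |∫ z in (0:ℝ)..y, b z θ / (s z θ) ^ 2| ≤ C * y := this
      _ ≤ C * η := by nlinarith [hy.2]
  have hpp : ∀ y ∈ Icc (0:ℝ) r, Real.exp (-(2 * C * η)) ≤ pprime b s θ y ∧
      pprime b s θ y ≤ Real.exp (2 * C * η) := by
    intro y hy
    have hy' : y ∈ Icc (0:ℝ) η := ⟨hy.1, hy.2.trans hr.2⟩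
    have hFy := hF y hy'
    rw [abs_le] at hFy
    constructor
    · rw [pprime]; apply Real.exp_le_exp.mpr; nlinarith [hFy.1, hFy.2]
    · rw [pprime]; apply Real.exp_le_exp.mpr; nlinarith [hFy.1, hFy.2]
  have hint : IntervalIntegrable (pprime b s θ) volume 0 r :=
    pprime_intInt h hθ le_rfl hr.1 (lt_of_le_of_lt (ENNReal.ofReal_le_ofReal hr.2) hηθ)
  constructor
  · have := intervalIntegral.integral_mono_on hr.1 intervalIntegrable_const hint
      (fun x hx => (hpp x hx).1)
    rw [intervalIntegral.integral_const] at this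
    rw [pscale]
    calc Real.exp (-(2 * C * η)) * r = (r - 0) • Real.exp (-(2 * C * η)) := by
          rw [smul_eq_mul]; ring
      _ ≤ _ := this
  · have := intervalIntegral.integral_mono_on hr.1 hint intervalIntegrable_const
      (fun x hx => (hpp x hx).2)
    rw [intervalIntegral.integral_const] at this
    rw [pscale]
    calc pscale b s θ r ≤ (r - 0) • Real.exp (2 * C * η) := this
      _ = Real.exp (2 * C * η) * r := by rw [smul_eq_mul]; ring


section PmapAux
variable {ℓ : ℝ → ℝ≥0∞} {b s : ℝ → ℝ → ℝ}

lemma mem_Iset {x : EuclideanSpace ℝ (Fin 2)} :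
    x ∈ Iset ℓ ↔ ENNReal.ofReal ‖x‖ < ℓ (argOf x) := Iff.rfl

lemma mem_Jset {x : EuclideanSpace ℝ (Fin 2)} :
    x ∈ Jset ℓ b s ↔ ENNReal.ofReal ‖x‖ < pEnd ℓ b s (argOf x) := Iff.rfl

lemma Pmap_zero : Pmap b s 0 = 0 := by
  unfold Pmap
  simp

lemma Pmap_spec (h : CondC ℓ b s) {x : EuclideanSpace ℝ (Fin 2)} (hx0 : x ≠ 0)
    (hx : ENNReal.ofReal ‖x‖ < ℓ (argOf x)) :
    argOf (Pmap b s x) = argOf x ∧ ‖Pmap b s x‖ = pscale b s (argOf x) ‖x‖ ∧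
      ‖Pmap b s x‖⁻¹ • Pmap b s x = ‖x‖⁻¹ • x := by
  have hθ := argOf_mem x
  have hp : 0 < pscale b s (argOf x) ‖x‖ := pscale_pos h hθ (norm_pos_iff.mpr hx0) hx
  have hrep : Pmap b s x = (pscale b s (argOf x) ‖x‖ * ‖x‖⁻¹) • x := by
    unfold Pmap; rw [smul_smul]
  have hc : 0 < pscale b s (argOf x) ‖x‖ * ‖x‖⁻¹ :=
    mul_pos hp (inv_pos.mpr (norm_pos_iff.mpr hx0))
  refine ⟨?_, ?_, ?_⟩
  · rw [hrep, argOf_smul x hc]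
  · unfold Pmap
    rw [norm_smul, norm_dir hx0, mul_one, Real.norm_eq_abs, abs_of_pos hp]
  · rw [hrep, dir_smul hc]

end PmapAux

/-- Under Condition (C), the scale mapping `𝒫` is a bijection from `I` onto `J`, and
both `𝒫` and its inverse `𝒬` are continuous with respect to the tree-metric. -/
theorem scale_mapping_tree_homeomorphism
    (ℓ : ℝ → ℝ≥0∞) (b s : ℝ → ℝ → ℝ) (h : CondC ℓ b s) :
    Set.BijOn (Pmap b s) (Iset ℓ) (Jset ℓ b s) ∧
    (∀ x ∈ Iset ℓ, ∀ ε > (0:ℝ), ∃ δ > (0:ℝ), ∀ y ∈ Iset ℓ,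
      treeDist x y < δ → treeDist (Pmap b s x) (Pmap b s y) < ε) ∧
    ∃ Q : EuclideanSpace ℝ (Fin 2) → EuclideanSpace ℝ (Fin 2),
      (∀ x ∈ Iset ℓ, Q (Pmap b s x) = x) ∧
      (∀ y ∈ Jset ℓ b s, Q y ∈ Iset ℓ ∧ Pmap b s (Q y) = y) ∧
      (∀ y ∈ Jset ℓ b s, ∀ ε > (0:ℝ), ∃ δ > (0:ℝ), ∀ z ∈ Jset ℓ b s,
        treeDist y z < δ → treeDist (Q y) (Q z) < ε) := by
  obtain ⟨η, hη, hηl, C, hC⟩ := h.bound_near_origin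
  have h0Ico : (0:ℝ) ∈ Ico (0:ℝ) (2 * Real.pi) := ⟨le_rfl, Real.two_pi_pos⟩
  have h0I : (0 : EuclideanSpace ℝ (Fin 2)) ∈ Iset ℓ := by
    rw [mem_Iset, norm_zero, argOf_zero]
    exact ell_theta_pos h h0Ico
  -- maps to
  have hmaps : MapsTo (Pmap b s) (Iset ℓ) (Jset ℓ b s) := by
    intro x hx
    by_cases hx0 : x = 0
    · subst hx0
      rw [Pmap_zero, mem_Jset, norm_zero, argOf_zero, ENNReal.ofReal_zero]
      exact pEnd_pos h h0Ico
    · obtain ⟨harg, hnorm, -⟩ := Pmap_spec h hx0 (mem_Iset.mp hx)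
      rw [mem_Jset, harg, hnorm]
      exact pEnd_gt h (argOf_mem x) (norm_nonneg x) (mem_Iset.mp hx)
  -- P x ≠ 0 for x ≠ 0 in I
  have hPne : ∀ x : EuclideanSpace ℝ (Fin 2), x ∈ Iset ℓ → x ≠ 0 → Pmap b s x ≠ 0 := by
    intro x hx hx0 hzero
    have hn := (Pmap_spec h hx0 (mem_Iset.mp hx)).2.1
    rw [hzero, norm_zero] at hn
    exact absurd hn.symm
      (ne_of_gt (pscale_pos h (argOf_mem x) (norm_pos_iff.mpr hx0) (mem_Iset.mp hx)))
  -- injectivity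
  have hinj : InjOn (Pmap b s) (Iset ℓ) := by
    intro x hx x' hx' heq
    by_cases hx0 : x = 0 <;> by_cases hx0' : x' = 0
    · rw [hx0, hx0']
    · exact absurd (by rw [← heq, hx0, Pmap_zero]) (hPne x' hx' hx0')
    · exact absurd (by rw [heq, hx0', Pmap_zero]) (hPne x hx hx0)
    · obtain ⟨ha, hn, hd⟩ := Pmap_spec h hx0 (mem_Iset.mp hx)
      obtain ⟨ha', hn', hd'⟩ := Pmap_spec h hx0' (mem_Iset.mp hx')
      have harg : argOf x = argOf x' := by rw [← ha, ← ha', heq]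
      have hnorm : pscale b s (argOf x) ‖x‖ = pscale b s (argOf x) ‖x'‖ := by
        rw [← hn, heq, hn', harg]
      have hxx : ‖x‖ = ‖x'‖ := pscale_inj h (argOf_mem x) (norm_nonneg x) (norm_nonneg x')
        (mem_Iset.mp hx) (by rw [harg]; exact mem_Iset.mp hx') hnorm
      have hdir : ‖x‖⁻¹ • x = ‖x'‖⁻¹ • x' := by rw [← hd, heq, hd']
      calc x = ‖x‖ • (‖x‖⁻¹ • x) := (norm_smul_dir x).symm
        _ = ‖x'‖ • (‖x'‖⁻¹ • x') := by rw [hdir, hxx]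
        _ = x' := norm_smul_dir x'
  -- surjectivity
  have hsurj : SurjOn (Pmap b s) (Iset ℓ) (Jset ℓ b s) := by
    intro y hy
    by_cases hy0 : y = 0
    · exact ⟨0, h0I, by rw [Pmap_zero, hy0]⟩
    · obtain ⟨r, hr0, hrℓ, hpr⟩ := pEnd_surj h (argOf_mem y) (norm_nonneg y) (mem_Jset.mp hy)
      have hrpos : 0 < r := by
        rcases eq_or_lt_of_le hr0 with rfl | h' 
        · exfalso
          rw [pscale_zero] at hpr
          exact hy0 (norm_eq_zero.mp hpr.symm)
        · exact h' 
      have hynorm : 0 < ‖y‖ := norm_pos_iff.mpr hy0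
      refine ⟨r • (‖y‖⁻¹ • y), ?_, ?_⟩
      · have hnx : ‖r • (‖y‖⁻¹ • y)‖ = r := by
          rw [norm_smul, norm_dir hy0, mul_one, Real.norm_eq_abs, abs_of_pos hrpos]
        have hax : argOf (r • (‖y‖⁻¹ • y)) = argOf y := by
          rw [argOf_smul _ hrpos, argOf_smul _ (inv_pos.mpr hynorm)]
        rw [mem_Iset, hnx, hax]
        exact hrℓ
      · have hnx : ‖r • (‖y‖⁻¹ • y)‖ = r := by
          rw [norm_smul, norm_dir hy0, mul_one, Real.norm_eq_abs, abs_of_pos hrpos]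
        have hax : argOf (r • (‖y‖⁻¹ • y)) = argOf y := by
          rw [argOf_smul _ hrpos, argOf_smul _ (inv_pos.mpr hynorm)]
        have hdirx : ‖r • (‖y‖⁻¹ • y)‖⁻¹ • (r • (‖y‖⁻¹ • y)) = ‖y‖⁻¹ • y := by
          rw [dir_smul hrpos, dir_smul (inv_pos.mpr hynorm)]
        show pscale b s (argOf (r • (‖y‖⁻¹ • y))) ‖r • (‖y‖⁻¹ • y)‖ •
          (‖r • (‖y‖⁻¹ • y)‖⁻¹ • (r • (‖y‖⁻¹ • y))) = y
        rw [hdirx, hax, hnx, hpr]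
        exact norm_smul_dir y
  refine ⟨⟨hmaps, hinj, hsurj⟩, ?_, ?_⟩
  · -- continuity of Pmap
    intro x hx ε hε
    by_cases hx0 : x = 0
    · subst hx0
      refine ⟨min η (ε * Real.exp (-(2 * C * η))),
        lt_min hη (mul_pos hε (Real.exp_pos _)), ?_⟩
      intro y hy hdist
      rw [Pmap_zero, treeDist_zero_left]
      rw [treeDist_zero_left] at hdist
      by_cases hy0 : y = 0
      · rw [hy0, Pmap_zero, norm_zero]; exact hε
      · have hyn : ‖y‖ ∈ Icc (0:ℝ) η :=
          ⟨norm_nonneg y, le_of_lt (lt_of_lt_of_le hdist (min_le_left _ _))⟩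
        have hub := (pscale_near h hη hηl hC (argOf_mem y) hyn).2
        rw [(Pmap_spec h hy0 (mem_Iset.mp hy)).2.1]
        have h1 : ‖y‖ < ε * Real.exp (-(2 * C * η)) :=
          lt_of_lt_of_le hdist (min_le_right _ _)
        have hexp : Real.exp (2 * C * η) * Real.exp (-(2 * C * η)) = 1 := by
          rw [← Real.exp_add, add_neg_cancel, Real.exp_zero]
        calc pscale b s (argOf y) ‖y‖ ≤ Real.exp (2 * C * η) * ‖y‖ := hub
          _ < Real.exp (2 * C * η) * (ε * Real.exp (-(2 * C * η))) :=
              mul_lt_mul_of_pos_left h1 (Real.exp_pos _)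
          _ = ε := by rw [mul_comm ε _, ← mul_assoc, hexp, one_mul]
    · have hθmem := argOf_mem x
      have hr₀ : 0 < ‖x‖ := norm_pos_iff.mpr hx0
      have hxIℓ := mem_Iset.mp hx
      obtain ⟨r₂, hr₂gt, hr₂ℓ⟩ := exists_dom_gt hxIℓ
      have hcont : ContinuousAt (pscale b s (argOf x)) ‖x‖ := by
        apply (pscale_contOn h hθmem (le_of_lt (hr₀.trans hr₂gt)) hr₂ℓ).continuousAt
        exact Icc_mem_nhds hr₀ hr₂gt
      rw [Metric.continuousAt_iff] at hcont
      obtain ⟨δ₁, hδ₁, hδball⟩ := hcont ε hε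
      refine ⟨min δ₁ ‖x‖, lt_min hδ₁ hr₀, ?_⟩
      intro y hy hdist
      obtain ⟨t, ht, rfl⟩ := eq_smul_of_treeDist_lt hx0
        (lt_of_lt_of_le hdist (min_le_right _ _))
      have hray : OnSameRay x (t • x) := Or.inr (Or.inr ⟨t, ht, rfl⟩)
      have hdeq : treeDist x (t • x) = |‖x‖ - ‖t • x‖| := by
        unfold treeDist; rw [if_pos hray]
      have hdist' : |‖x‖ - ‖t • x‖| < δ₁ := by
        rw [← hdeq]; exact lt_of_lt_of_le hdist (min_le_left _ _)
      have hargy : argOf (t • x) = argOf x := argOf_smul x ht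
      have hd1 : ‖(‖x‖⁻¹ • x : EuclideanSpace ℝ (Fin 2))‖ = 1 := norm_dir hx0
      have hP1 : Pmap b s x = pscale b s (argOf x) ‖x‖ • (‖x‖⁻¹ • x) := rfl
      have hP2 : Pmap b s (t • x) = pscale b s (argOf x) ‖t • x‖ • (‖x‖⁻¹ • x) := by
        unfold Pmap
        rw [hargy, dir_smul ht]
      rw [hP1, hP2, treeDist_smul hd1 (pscale_nonneg _ (norm_nonneg x))
        (pscale_nonneg _ (norm_nonneg _))]
      have := hδball (show dist ‖t • x‖ ‖x‖ < δ₁ by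
        rw [Real.dist_eq, abs_sub_comm]; exact hdist')
      rw [Real.dist_eq] at this
      rw [abs_sub_comm]
      exact this
  · -- the inverse map
    set Q := Function.invFunOn (Pmap b s) (Iset ℓ) with hQdef
    have hQP : ∀ x ∈ Iset ℓ, Q (Pmap b s x) = x := fun x hx => hinj.leftInvOn_invFunOn hx
    have hQmem : ∀ y ∈ Jset ℓ b s, Q y ∈ Iset ℓ := by
      intro y hy
      obtain ⟨x, hxI, hxy⟩ := hsurj hy
      exact Function.invFunOn_mem (f := Pmap b s) (s := Iset ℓ) ⟨x, hxI, hxy⟩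
    have hPQ : ∀ y ∈ Jset ℓ b s, Pmap b s (Q y) = y := by
      intro y hy
      obtain ⟨x, hxI, hxy⟩ := hsurj hy
      exact Function.invFunOn_eq (f := Pmap b s) (s := Iset ℓ) ⟨x, hxI, hxy⟩
    refine ⟨Q, hQP, fun y hy => ⟨hQmem y hy, hPQ y hy⟩, ?_⟩
    intro y hy ε hε
    by_cases hy0 : y = 0
    · subst hy0
      have hQ0 : Q 0 = 0 := by
        have := hQP 0 h0I
        rwa [Pmap_zero] at this
      refine ⟨Real.exp (-(2 * C * η)) * min ε η,
        mul_pos (Real.exp_pos _) (lt_min hε hη), ?_⟩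
      intro z hz hdist
      rw [hQ0, treeDist_zero_left]
      rw [treeDist_zero_left] at hdist
      have hwI := hQmem z hz
      have hwP := hPQ z hz
      by_cases hw0 : Q z = 0
      · rw [hw0, norm_zero]; exact hε
      · have hzn := (Pmap_spec h hw0 (mem_Iset.mp hwI)).2.1
        rw [hwP] at hzn
        by_contra hcon
        push_neg at hcon
        have hm : min ε η ≤ ‖Q z‖ := le_trans (min_le_left _ _) hcon
        have hmmem : min ε η ∈ Icc (0:ℝ) η := ⟨(lt_min hε hη).le, min_le_right _ _⟩
        have hlow := (pscale_near h hη hηl hC (argOf_mem (Q z)) hmmem).1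
        have hmono := pscale_mono h (argOf_mem (Q z)) (lt_min hε hη).le hm
          (mem_Iset.mp hwI)
        rw [← hzn] at hmono
        linarith
    · have hxI := hQmem y hy
      have hxP := hPQ y hy
      have hx0 : Q y ≠ 0 := by
        intro h0
        apply hy0
        rw [← hxP, h0, Pmap_zero]
      obtain ⟨harg, hnorm, hdir⟩ := Pmap_spec h hx0 (mem_Iset.mp hxI)
      have hθmem := argOf_mem (Q y)
      have hr₀pos : 0 < ‖Q y‖ := norm_pos_iff.mpr hx0
      have hxIℓ := mem_Iset.mp hxI
      have hyn : ‖y‖ = pscale b s (argOf (Q y)) ‖Q y‖ := by rw [← hnorm, hxP]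
      have hypos : 0 < ‖y‖ := norm_pos_iff.mpr hy0
      obtain ⟨r₂', hr₂'gt, hr₂'ℓ⟩ := exists_dom_gt hxIℓ
      set r₂ := min r₂' (‖Q y‖ + ε / 2) with hr₂def
      have hr₂gt : ‖Q y‖ < r₂ := lt_min hr₂'gt (by linarith)
      have hr₂ℓ : ENNReal.ofReal r₂ < ℓ (argOf (Q y)) :=
        lt_of_le_of_lt (ENNReal.ofReal_le_ofReal (min_le_left _ _)) hr₂'ℓ
      set r₁ := max (‖Q y‖ / 2) (‖Q y‖ - ε / 2) with hr₁def
      have hr₁nn : 0 ≤ r₁ := le_trans (by positivity) (le_max_left _ _)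
      have hr₁lt : r₁ < ‖Q y‖ := max_lt (by linarith) (by linarith)
      have hr₁ℓ : ENNReal.ofReal r₁ < ℓ (argOf (Q y)) :=
        lt_of_le_of_lt (ENNReal.ofReal_le_ofReal hr₁lt.le) hxIℓ
      have hplt1 : pscale b s (argOf (Q y)) r₁ < pscale b s (argOf (Q y)) ‖Q y‖ :=
        pscale_lt h hθmem hr₁nn hr₁lt hxIℓ
      have hplt2 : pscale b s (argOf (Q y)) ‖Q y‖ < pscale b s (argOf (Q y)) r₂ :=
        pscale_lt h hθmem (norm_nonneg _) hr₂gt hr₂ℓ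
      refine ⟨min (min (pscale b s (argOf (Q y)) r₂ - pscale b s (argOf (Q y)) ‖Q y‖)
        (pscale b s (argOf (Q y)) ‖Q y‖ - pscale b s (argOf (Q y)) r₁)) ‖y‖,
        lt_min (lt_min (by linarith) (by linarith)) hypos, ?_⟩
      intro z hz hdist
      obtain ⟨t, ht, rfl⟩ := eq_smul_of_treeDist_lt hy0
        (lt_of_lt_of_le hdist (min_le_right _ _))
      have hray : OnSameRay y (t • y) := Or.inr (Or.inr ⟨t, ht, rfl⟩)
      have hdeq : treeDist y (t • y) = |‖y‖ - ‖t • y‖| := by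
        unfold treeDist; rw [if_pos hray]
      have hdist2 : |‖y‖ - ‖t • y‖| <
          min (pscale b s (argOf (Q y)) r₂ - pscale b s (argOf (Q y)) ‖Q y‖)
            (pscale b s (argOf (Q y)) ‖Q y‖ - pscale b s (argOf (Q y)) r₁) := by
        rw [← hdeq]; exact lt_of_lt_of_le hdist (min_le_left _ _)
      have habsA := abs_lt.mp (lt_of_lt_of_le hdist2 (min_le_left _ _))
      have habsB := abs_lt.mp (lt_of_lt_of_le hdist2 (min_le_right _ _))
      have hu1 : pscale b s (argOf (Q y)) r₁ < ‖t • y‖ := by linarith [habsB.2]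
      have hu2 : ‖t • y‖ < pscale b s (argOf (Q y)) r₂ := by linarith [habsA.1]
      have hupos : 0 < ‖t • y‖ := lt_of_le_of_lt (pscale_nonneg _ hr₁nn) hu1
      have hz0 : (t • y : EuclideanSpace ℝ (Fin 2)) ≠ 0 := norm_pos_iff.mp hupos
      have hwI := hQmem _ hz
      have hwP := hPQ _ hz
      have hw0 : Q (t • y) ≠ 0 := fun h0 => hz0 (by rw [← hwP, h0, Pmap_zero])
      obtain ⟨harg', hnorm', hdir'⟩ := Pmap_spec h hw0 (mem_Iset.mp hwI)
      have hay : argOf y = argOf (Q y) := by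
        conv_lhs => rw [← hxP, harg]
      have hargw : argOf (Q (t • y)) = argOf (Q y) := by
        rw [← harg', hwP, argOf_smul y ht, hay]
      have hρℓ : ENNReal.ofReal ‖Q (t • y)‖ < ℓ (argOf (Q y)) := by
        rw [← hargw]; exact mem_Iset.mp hwI
      have hpu : pscale b s (argOf (Q y)) ‖Q (t • y)‖ = ‖t • y‖ := by
        rw [← hargw, ← hnorm', hwP]
      have hρ1 : r₁ < ‖Q (t • y)‖ := by
        by_contra hcon
        push_neg at hcon
        have := pscale_mono h hθmem (norm_nonneg _) hcon hr₁ℓ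
        rw [hpu] at this
        linarith
      have hρ2 : ‖Q (t • y)‖ < r₂ := by
        by_contra hcon
        push_neg at hcon
        have := pscale_mono h hθmem ((norm_nonneg (Q y)).trans hr₂gt.le) hcon hρℓ
        rw [hpu] at this
        linarith
      have hr₂ub : r₂ ≤ ‖Q y‖ + ε / 2 := min_le_right _ _
      have hr₁lb : ‖Q y‖ - ε / 2 ≤ r₁ := le_max_right _ _
      have hd1 : ‖(‖Q y‖⁻¹ • Q y : EuclideanSpace ℝ (Fin 2))‖ = 1 := norm_dir hx0
      have hdy : ‖y‖⁻¹ • y = ‖Q y‖⁻¹ • Q y := by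
        conv_lhs => rw [← hxP, hdir]
      have hdw : ‖Q (t • y)‖⁻¹ • Q (t • y) = ‖Q y‖⁻¹ • Q y := by
        rw [← hdir', hwP, dir_smul ht, hdy]
      have hxd : Q y = ‖Q y‖ • (‖Q y‖⁻¹ • Q y) := (norm_smul_dir _).symm
      have hwd : Q (t • y) = ‖Q (t • y)‖ • (‖Q y‖⁻¹ • Q y) := by
        rw [← hdw]; exact (norm_smul_dir _).symm
      have key : treeDist (Q y) (Q (t • y)) = |‖Q y‖ - ‖Q (t • y)‖| := by
        nth_rewrite 1 [hxd, hwd]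
        exact treeDist_smul hd1 (norm_nonneg _) (norm_nonneg _)
      rw [key, abs_lt]
      constructor <;> linarith
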